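/- Let Λ > 0 and suppose school 1 is not exclusive. If p_1 > 1 − 1/Λ, then the true ROL (1,2,…,m) is strictly optimal: its utility is strictly greater than that of every ROL inducing a different vector of match probabilities. -/

import Mathlib

open Finset

/-- An attainability distribution over states `A : Fin (m+2) → Bool`:
nonnegative, sums to one, and the outside option (school `m+2`, the last one)
is always attainable. -/
def IsAttDist {m : ℕ} (P : (Fin (m + 2) → Bool) → ℝ) : Prop :=
  (∀ A, 0 ≤ P A) ∧ (∑ A : Fin (m + 2) → Bool, P A = 1) ∧
    ∀ A : Fin (m + 2) → Bool, A (Fin.last (m + 1)) = false → P A = 0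

/-- Full support: every state in which the outside option is attainable has
strictly positive probability. -/
def FullSupport {m : ℕ} (P : (Fin (m + 2) → Bool) → ℝ) : Prop :=
  ∀ A : Fin (m + 2) → Bool, A (Fin.last (m + 1)) = true → 0 < P A

/-- Match probability of school `s` under ROL `ρ` (where `ρ k` is the school
ranked in position `k`): the probability that `s` is attainable and no school
ranked before `s` is attainable. -/
def matchProb {m : ℕ} (P : (Fin (m + 2) → Bool) → ℝ)
    (ρ : Equiv.Perm (Fin (m + 2))) (s : Fin (m + 2)) : ℝ :=
  ∑ A : Fin (m + 2) → Bool,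
    if A s = true ∧ ∀ ℓ, ℓ < ρ.symm s → A (ρ ℓ) = false then P A else 0

/-- Reference-dependent expected utility of a lottery `f` with loss dominance `Λ`. -/
def utility {m : ℕ} (Λ : ℝ) (v f : Fin (m + 2) → ℝ) : ℝ :=
  (∑ s, f s * v s) -
    Λ * ∑ s, ∑ r ∈ Finset.univ.filter (fun r => s < r), f s * f r * (v s - v r)

/-- An ROL is strictly optimal if its utility strictly exceeds that of every ROL
inducing a different vector of match probabilities. -/
def StrictlyOptimal {m : ℕ} (Λ : ℝ) (v : Fin (m + 2) → ℝ)
    (P : (Fin (m + 2) → Bool) → ℝ) (ρ : Equiv.Perm (Fin (m + 2))) : Prop :=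
  ∀ ρ' : Equiv.Perm (Fin (m + 2)), matchProb P ρ' ≠ matchProb P ρ →
    utility Λ v (matchProb P ρ') < utility Λ v (matchProb P ρ)

/-- An ROL is (weakly) optimal if its utility is weakly greater than that of
every other ROL. -/
def Optimal {m : ℕ} (Λ : ℝ) (v : Fin (m + 2) → ℝ)
    (P : (Fin (m + 2) → Bool) → ℝ) (ρ : Equiv.Perm (Fin (m + 2))) : Prop :=
  ∀ ρ' : Equiv.Perm (Fin (m + 2)),
    utility Λ v (matchProb P ρ') ≤ utility Λ v (matchProb P ρ)

/-- Top-rank monotonicity of an ROL `ρ` (`ρ k` = school at rank `k`; lower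
school label = more preferred). -/
def TopRankMonotone {m : ℕ} (ρ : Equiv.Perm (Fin (m + 2))) : Prop :=
  (∀ k i : Fin (m + 2), ρ k < ρ 0 → ρ i < ρ k → k < i) ∧
    ∀ l j : Fin (m + 2), ρ 0 < ρ l → ρ j < ρ l → j < l


section stmt4aux
set_option linter.unusedSectionVars false

lemma abel_aux (w k : ℕ → ℝ) (n : ℕ) (hk0 : k 0 = 0) :
    ∑ s ∈ range (n+1), w s * (k (s+1) - k s)
      = w n * k (n+1) + ∑ t ∈ range n, (w t - w (t+1)) * k (t+1) := by
  have h := Finset.sum_range_by_parts w (fun s => k (s+1) - k s) (n+1)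
  simp only [smul_eq_mul, Finset.sum_range_sub (fun i => k i), hk0, sub_zero,
    Nat.add_sub_cancel] at h
  rw [h, sub_eq_add_neg, ← Finset.sum_neg_distrib]
  congr 1
  exact Finset.sum_congr rfl (fun i _ => by ring)

lemma util_rw (n : ℕ) (Λ : ℝ) (w g : ℕ → ℝ)
    (hsum : ∑ s ∈ range (n+1), g s = 1) :
    (∑ s ∈ range (n+1), g s * w s)
      - Λ * ∑ s ∈ range (n+1), ∑ r ∈ (range (n+1)).filter (fun r => s < r),
          g s * g r * (w s - w r)
    = w n + ∑ t ∈ range n, (w t - w (t+1)) *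
        ((1-Λ) * (∑ j ∈ range (t+1), g j) + Λ * (∑ j ∈ range (t+1), g j)^2) := by
  set K : ℕ → ℝ := fun t => ∑ j ∈ range t, g j with hK
  have hKsucc : ∀ s, K (s+1) = K s + g s := fun s => Finset.sum_range_succ g s
  have hK0 : K 0 = 0 := Finset.sum_range_zero g
  have hKn : K (n+1) = 1 := hsum
  -- tail sums
  have htail : ∀ s ∈ range (n+1), ∑ r ∈ (range (n+1)).filter (fun r => s < r), g r
      = 1 - K (s+1) := by
    intro s hs
    rw [mem_range] at hs
    have hset : (range (n+1)).filter (fun r => s < r) = Ico (s+1) (n+1) := by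
      ext r; simp only [mem_filter, mem_range, mem_Ico]; try omega
    have hco := Finset.sum_Ico_consecutive g (Nat.zero_le (s+1)) (by omega : s+1 ≤ n+1)
    rw [hset]
    have h1 : ∑ i ∈ Ico 0 (s+1), g i = K (s+1) := by rw [← Finset.range_eq_Ico]
    have h2 : ∑ i ∈ Ico 0 (n+1), g i = 1 := by rw [← Finset.range_eq_Ico]; exact hsum
    linarith [hco, h1, h2]
  -- head sums
  have hhead : ∀ r ∈ range (n+1), ∑ s ∈ (range (n+1)).filter (fun s => s < r), g s
      = K r := by
    intro r hr
    rw [mem_range] at hr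
    have hset : (range (n+1)).filter (fun s => s < r) = range r := by
      ext x; simp only [mem_filter, mem_range]; omega
    rw [hset]
  -- the double sum
  have hD : ∑ s ∈ range (n+1), ∑ r ∈ (range (n+1)).filter (fun r => s < r),
        g s * g r * (w s - w r)
      = ∑ s ∈ range (n+1), g s * w s * (1 - K (s+1) - K s) := by
    have step1 : ∀ s ∈ range (n+1),
        ∑ r ∈ (range (n+1)).filter (fun r => s < r), g s * g r * (w s - w r)
          = g s * w s * (1 - K (s+1))
            - ∑ r ∈ (range (n+1)).filter (fun r => s < r), g s * g r * w r := by
      intro s hs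
      have : ∑ r ∈ (range (n+1)).filter (fun r => s < r), g s * g r * (w s - w r)
          = (∑ r ∈ (range (n+1)).filter (fun r => s < r), g s * w s * g r)
            - ∑ r ∈ (range (n+1)).filter (fun r => s < r), g s * g r * w r := by
        rw [← Finset.sum_sub_distrib]
        exact Finset.sum_congr rfl (fun r _ => by ring)
      rw [this, ← Finset.mul_sum, htail s hs]
    rw [Finset.sum_congr rfl step1, Finset.sum_sub_distrib]
    have step2 : ∑ s ∈ range (n+1), ∑ r ∈ (range (n+1)).filter (fun r => s < r),
        g s * g r * w r = ∑ r ∈ range (n+1), g r * w r * K r := by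
      have e1 : ∀ s ∈ range (n+1), ∑ r ∈ (range (n+1)).filter (fun r => s < r),
          g s * g r * w r = ∑ r ∈ range (n+1), if s < r then g s * g r * w r else 0 :=
        fun s _ => Finset.sum_filter _ _
      rw [Finset.sum_congr rfl e1, Finset.sum_comm]
      refine Finset.sum_congr rfl (fun r hr => ?_)
      have e2 : ∑ s ∈ range (n+1), (if s < r then g s * g r * w r else 0)
          = ∑ s ∈ (range (n+1)).filter (fun s => s < r), g s * g r * w r :=
        (Finset.sum_filter _ _).symm
      have e3 : ∑ s ∈ (range (n+1)).filter (fun s => s < r), g s * g r * w r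
          = (∑ s ∈ (range (n+1)).filter (fun s => s < r), g s) * (g r * w r) := by
        rw [Finset.sum_mul]; exact Finset.sum_congr rfl fun s _ => by ring
      rw [e2, e3, hhead r hr]; ring
    rw [step2, ← Finset.sum_sub_distrib]
    exact Finset.sum_congr rfl (fun s _ => by ring)
  rw [hD, Finset.mul_sum, ← Finset.sum_sub_distrib]
  have hM : ∀ s ∈ range (n+1), g s * w s - Λ * (g s * w s * (1 - K (s+1) - K s))
      = w s * (((1-Λ) * K (s+1) + Λ * (K (s+1))^2) - ((1-Λ) * K s + Λ * (K s)^2)) := by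
    intro s _
    rw [hKsucc s]; ring
  rw [Finset.sum_congr rfl hM,
    abel_aux w (fun t => (1-Λ) * K t + Λ * (K t)^2) n (by simp [hK0])]
  rw [hKn]
  norm_num
  rfl

section combinat
variable {m : ℕ}

lemma match_unique (ρ : Equiv.Perm (Fin (m+2))) (A : Fin (m+2) → Bool) {s s' : Fin (m+2)}
    (hs : A s = true ∧ ∀ ℓ, ℓ < ρ.symm s → A (ρ ℓ) = false)
    (hs' : A s' = true ∧ ∀ ℓ, ℓ < ρ.symm s' → A (ρ ℓ) = false) : s = s' := by
  rcases lt_trichotomy (ρ.symm s) (ρ.symm s') with h | h | h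
  · have := hs'.2 _ h
    rw [Equiv.apply_symm_apply] at this
    rw [hs.1] at this; exact absurd this (by simp)
  · have := congrArg ρ h; simpa using this
  · have := hs.2 _ h
    rw [Equiv.apply_symm_apply] at this
    rw [hs'.1] at this; exact absurd this (by simp)

lemma sum_ite_of_unique {α : Type*} [DecidableEq α] (T : Finset α) (c : α → Prop)
    [DecidablePred c] (p : ℝ) (huniq : ∀ s s', c s → c s' → s = s')
    (hex : ∃ s ∈ T, c s) : (∑ s ∈ T, if c s then p else 0) = p := by
  obtain ⟨s₀, hs₀T, hs₀⟩ := hex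
  rw [Finset.sum_eq_single_of_mem s₀ hs₀T]
  · rw [if_pos hs₀]
  · intro b _ hb
    rw [if_neg (fun hcb => hb (huniq b s₀ hcb hs₀))]

lemma sum_ite_of_not {α : Type*} (T : Finset α) (c : α → Prop)
    [DecidablePred c] (p : ℝ) (hex : ¬ ∃ s ∈ T, c s) :
    (∑ s ∈ T, if c s then p else 0) = 0 :=
  Finset.sum_eq_zero fun s hsT => if_neg (fun hc => hex ⟨s, hsT, hc⟩)

/-- per-state bound for an arbitrary ROL -/
lemma inner_le (ρ : Equiv.Perm (Fin (m+2))) (A : Fin (m+2) → Bool)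
    (T : Finset (Fin (m+2))) (p : ℝ) (hp : 0 ≤ p) :
    (∑ s ∈ T, if A s = true ∧ ∀ ℓ, ℓ < ρ.symm s → A (ρ ℓ) = false then p else 0)
      ≤ if ∃ s ∈ T, A s = true then p else 0 := by
  by_cases hex : ∃ s ∈ T, A s = true ∧ ∀ ℓ, ℓ < ρ.symm s → A (ρ ℓ) = false
  · rw [sum_ite_of_unique T _ p (fun s s' hs hs' => match_unique ρ A hs hs') hex]
    obtain ⟨s, hsT, hc⟩ := hex
    rw [if_pos ⟨s, hsT, hc.1⟩]
  · rw [sum_ite_of_not T _ p hex]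
    split <;> [exact hp; exact le_rfl]

/-- per-state equality for the identity ROL on a down-set -/
lemma inner_eq_id (A : Fin (m+2) → Bool) (t : Fin (m+2)) (p : ℝ) :
    (∑ s ∈ univ.filter (· ≤ t),
        if A s = true ∧ ∀ ℓ, ℓ < (Equiv.refl (Fin (m+2))).symm s →
            A ((Equiv.refl (Fin (m+2))) ℓ) = false then p else 0)
      = if ∃ s ∈ univ.filter (· ≤ t), A s = true then p else 0 := by
  by_cases hex : ∃ s ∈ univ.filter (· ≤ t), A s = true
  · rw [if_pos hex]
    obtain ⟨s, hsT, hAs⟩ := hex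
    have hSne : (univ.filter (fun x => A x = true)).Nonempty :=
      ⟨s, mem_filter.mpr ⟨mem_univ s, hAs⟩⟩
    set s₀ := (univ.filter (fun x => A x = true)).min' hSne with hs₀def
    have hs₀mem := Finset.min'_mem (univ.filter (fun x => A x = true)) hSne
    have hAs₀ : A s₀ = true := (mem_filter.mp hs₀mem).2
    have hmin : ∀ ℓ, ℓ < s₀ → A ℓ = false := by
      intro ℓ hℓ
      by_contra hcon
      have hAℓ : A ℓ = true := by
        cases hA : A ℓ
        · exact absurd hA hcon
        · rfl
      have := Finset.min'_le (univ.filter (fun x => A x = true)) ℓ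
        (mem_filter.mpr ⟨mem_univ ℓ, hAℓ⟩)
      exact absurd hℓ (not_lt.mpr this)
    have hs₀T : s₀ ∈ univ.filter (· ≤ t) := by
      have hle : s₀ ≤ s := Finset.min'_le _ s (mem_filter.mpr ⟨mem_univ s, hAs⟩)
      have hst : s ≤ t := by simpa using (mem_filter.mp hsT).2
      exact mem_filter.mpr ⟨mem_univ s₀, le_trans hle hst⟩
    refine sum_ite_of_unique _ _ p (fun a a' ha ha' => match_unique _ A ha ha') ⟨s₀, hs₀T, ?_⟩
    refine ⟨hAs₀, fun ℓ hℓ => ?_⟩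
    simp only [Equiv.refl_symm, Equiv.refl_apply] at hℓ ⊢
    exact hmin ℓ hℓ
  · rw [if_neg hex]
    refine sum_ite_of_not _ _ p (fun ⟨s, hsT, hc⟩ => hex ⟨s, hsT, hc.1⟩)

/-- per-state full sum: if the outside option is attainable, some school matches -/
lemma inner_full (ρ : Equiv.Perm (Fin (m+2))) (A : Fin (m+2) → Bool)
    (hA : A (Fin.last (m+1)) = true) (p : ℝ) :
    (∑ s : Fin (m+2), if A s = true ∧ ∀ ℓ, ℓ < ρ.symm s → A (ρ ℓ) = false then p else 0)
      = p := by
  have hSne : (univ.filter (fun k => A (ρ k) = true)).Nonempty :=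
    ⟨ρ.symm (Fin.last (m+1)), mem_filter.mpr ⟨mem_univ _, by
      rw [Equiv.apply_symm_apply]; exact hA⟩⟩
  set k₀ := (univ.filter (fun k => A (ρ k) = true)).min' hSne with hk₀def
  have hk₀mem := Finset.min'_mem (univ.filter (fun k => A (ρ k) = true)) hSne
  have hAk₀ : A (ρ k₀) = true := (mem_filter.mp hk₀mem).2
  refine sum_ite_of_unique _ _ p (fun a a' ha ha' => match_unique _ A ha ha')
    ⟨ρ k₀, mem_univ _, ?_⟩
  refine ⟨hAk₀, fun ℓ hℓ => ?_⟩
  rw [Equiv.symm_apply_apply] at hℓ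
  by_contra hcon
  have hAℓ : A (ρ ℓ) = true := by
    cases hA' : A (ρ ℓ)
    · exact absurd hA' hcon
    · rfl
  have := Finset.min'_le (univ.filter (fun k => A (ρ k) = true)) ℓ
    (mem_filter.mpr ⟨mem_univ ℓ, hAℓ⟩)
  exact absurd hℓ (not_lt.mpr this)

end combinat

section prob
variable {m : ℕ} (P : (Fin (m + 2) → Bool) → ℝ) (hP : IsAttDist P)
include hP

lemma matchProb_nonneg (ρ : Equiv.Perm (Fin (m+2))) (s : Fin (m+2)) :
    0 ≤ matchProb P ρ s := by
  unfold matchProb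
  refine Finset.sum_nonneg fun A _ => ?_
  split
  · exact hP.1 A
  · exact le_rfl

lemma cum_id_eq (t : Fin (m+2)) :
    ∑ s ∈ univ.filter (· ≤ t), matchProb P (Equiv.refl (Fin (m+2))) s
      = ∑ A : Fin (m+2) → Bool,
          if ∃ s ∈ univ.filter (· ≤ t), A s = true then P A else 0 := by
  unfold matchProb
  rw [Finset.sum_comm]
  exact Finset.sum_congr rfl fun A _ => inner_eq_id A t (P A)

lemma cum_le_cum_id (ρ : Equiv.Perm (Fin (m+2))) (t : Fin (m+2)) :
    ∑ s ∈ univ.filter (· ≤ t), matchProb P ρ s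
      ≤ ∑ s ∈ univ.filter (· ≤ t), matchProb P (Equiv.refl (Fin (m+2))) s := by
  rw [cum_id_eq P hP]
  unfold matchProb
  rw [Finset.sum_comm]
  refine Finset.sum_le_sum fun A _ => ?_
  convert inner_le ρ A (univ.filter (· ≤ t)) (P A) (hP.1 A) using 2

lemma sum_matchProb (ρ : Equiv.Perm (Fin (m+2))) :
    ∑ s : Fin (m+2), matchProb P ρ s = 1 := by
  unfold matchProb
  rw [Finset.sum_comm]
  have key : ∀ A : Fin (m+2) → Bool,
      (∑ s : Fin (m+2), if A s = true ∧ ∀ ℓ, ℓ < ρ.symm s → A (ρ ℓ) = false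
        then P A else 0) = P A := by
    intro A
    cases hA : A (Fin.last (m+1))
    · rw [hP.2.2 A hA]
      exact Finset.sum_eq_zero fun s _ => by split <;> rfl
    · exact inner_full ρ A hA (P A)
  rw [Finset.sum_congr rfl fun A _ => key A]
  exact hP.2.1

lemma p1_le_cum (t : Fin (m+2)) :
    (∑ A : Fin (m+2) → Bool, if A 0 = true then P A else 0)
      ≤ ∑ s ∈ univ.filter (· ≤ t), matchProb P (Equiv.refl (Fin (m+2))) s := by
  rw [cum_id_eq P hP]
  refine Finset.sum_le_sum fun A _ => ?_
  by_cases h0 : A 0 = true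
  · rw [if_pos h0, if_pos ⟨0, mem_filter.mpr ⟨mem_univ _, Fin.zero_le t⟩, h0⟩]
  · rw [if_neg h0]
    split
    · exact hP.1 A
    · exact le_rfl

end prob

section bridge
variable {m : ℕ}

def gnat (P : (Fin (m+2) → Bool) → ℝ) (ρ : Equiv.Perm (Fin (m+2))) (s : ℕ) : ℝ :=
  if h : s < m+2 then matchProb P ρ ⟨s, h⟩ else 0

def wnat (v : Fin (m+2) → ℝ) (s : ℕ) : ℝ :=
  if h : s < m+2 then v ⟨s, h⟩ else 0

lemma gnat_coe (P : (Fin (m+2) → Bool) → ℝ) (ρ : Equiv.Perm (Fin (m+2)))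
    (s : Fin (m+2)) : gnat P ρ ↑s = matchProb P ρ s := by
  rw [gnat, dif_pos s.isLt]

lemma wnat_coe (v : Fin (m+2) → ℝ) (s : Fin (m+2)) : wnat v ↑s = v s := by
  rw [wnat, dif_pos s.isLt]

lemma util_eq_nat (Λ : ℝ) (v : Fin (m+2) → ℝ) (P : (Fin (m+2) → Bool) → ℝ)
    (ρ : Equiv.Perm (Fin (m+2))) :
    utility Λ v (matchProb P ρ)
      = (∑ s ∈ range (m+2), gnat P ρ s * wnat v s)
        - Λ * ∑ s ∈ range (m+2), ∑ r ∈ (range (m+2)).filter (fun r => s < r),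
            gnat P ρ s * gnat P ρ r * (wnat v s - wnat v r) := by
  rw [utility]
  congr 1
  · rw [← Fin.sum_univ_eq_sum_range (fun s => gnat P ρ s * wnat v s) (m+2)]
    exact Finset.sum_congr rfl fun i _ => by rw [gnat_coe, wnat_coe]
  · congr 1
    rw [← Fin.sum_univ_eq_sum_range
      (fun s => ∑ r ∈ (range (m+2)).filter (fun r => s < r),
        gnat P ρ s * gnat P ρ r * (wnat v s - wnat v r)) (m+2)]
    refine Finset.sum_congr rfl fun i _ => ?_
    rw [Finset.sum_filter, Finset.sum_filter,
      ← Fin.sum_univ_eq_sum_range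
        (fun r => if ↑i < r then gnat P ρ ↑i * gnat P ρ r * (wnat v ↑i - wnat v r) else 0)
        (m+2)]
    refine Finset.sum_congr rfl fun r _ => ?_
    by_cases h : i < r
    · rw [if_pos h, if_pos (Fin.lt_def.mp h), gnat_coe, gnat_coe, wnat_coe, wnat_coe]
    · rw [if_neg h, if_neg (fun hc => h (Fin.lt_def.mpr hc))]

lemma cum_nat (P : (Fin (m+2) → Bool) → ℝ) (ρ : Equiv.Perm (Fin (m+2)))
    (t : ℕ) (ht : t < m+2) :
    ∑ j ∈ range (t+1), gnat P ρ j
      = ∑ s ∈ univ.filter (· ≤ (⟨t, ht⟩ : Fin (m+2))), matchProb P ρ s := by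
  have h1 : ∀ s : Fin (m+2), (if s ≤ (⟨t, ht⟩ : Fin (m+2)) then matchProb P ρ s else 0)
      = if (↑s : ℕ) ≤ t then gnat P ρ ↑s else 0 := by
    intro s
    by_cases h : s ≤ (⟨t, ht⟩ : Fin (m+2))
    · rw [if_pos h, if_pos (Fin.le_def.mp h), gnat_coe]
    · rw [if_neg h, if_neg (fun hc => h (Fin.le_def.mpr hc))]
  calc ∑ j ∈ range (t+1), gnat P ρ j
      = ∑ j ∈ range (t+1), (if j ≤ t then gnat P ρ j else 0) :=
        Finset.sum_congr rfl fun j hj => (if_pos (by rw [mem_range] at hj; omega)).symm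
    _ = ∑ j ∈ range (m+2), (if j ≤ t then gnat P ρ j else 0) :=
        Finset.sum_subset (Finset.range_subset_range.mpr (by omega : t+1 ≤ m+2))
          (fun x _ hx => if_neg (by rw [mem_range] at hx; omega))
    _ = ∑ s : Fin (m+2), (if (↑s : ℕ) ≤ t then gnat P ρ ↑s else 0) :=
        (Fin.sum_univ_eq_sum_range (fun j => if j ≤ t then gnat P ρ j else 0) (m+2)).symm
    _ = ∑ s : Fin (m+2), (if s ≤ (⟨t, ht⟩ : Fin (m+2)) then matchProb P ρ s else 0) :=
        Finset.sum_congr rfl fun s _ => (h1 s).symm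
    _ = ∑ s ∈ univ.filter (· ≤ (⟨t, ht⟩ : Fin (m+2))), matchProb P ρ s :=
        (Finset.sum_filter _ _).symm

lemma phi_le (Λ x x' : ℝ) (hΛ : 0 < Λ) (hx' : 0 ≤ x') (hle : x' ≤ x)
    (hgt : 1 - 1/Λ < x) :
    (1-Λ) * x' + Λ * x'^2 ≤ (1-Λ) * x + Λ * x^2 := by
  have h1 : Λ * (1 - 1/Λ) = Λ - 1 := by field_simp
  have hfac : 0 < (1-Λ) + Λ*(x+x') := by
    nlinarith [mul_nonneg hΛ.le hx', mul_lt_mul_of_pos_left hgt hΛ]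
  nlinarith [mul_nonneg (sub_nonneg.mpr hle) hfac.le]

lemma phi_lt (Λ x x' : ℝ) (hΛ : 0 < Λ) (hx' : 0 ≤ x') (hlt : x' < x)
    (hgt : 1 - 1/Λ < x) :
    (1-Λ) * x' + Λ * x'^2 < (1-Λ) * x + Λ * x^2 := by
  have h1 : Λ * (1 - 1/Λ) = Λ - 1 := by field_simp
  have hfac : 0 < (1-Λ) + Λ*(x+x') := by
    nlinarith [mul_nonneg hΛ.le hx', mul_lt_mul_of_pos_left hgt hΛ]
  nlinarith [mul_pos (sub_pos.mpr hlt) hfac]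

end bridge

end stmt4aux

/-- If `Λ > 0`, school 1 is not exclusive, and
`p₁ > 1 - 1/Λ`, then the true ROL (the identity) is strictly optimal. -/
theorem stmt_4 (m : ℕ) (Λ : ℝ) (hΛ : 0 < Λ) (v : Fin (m + 2) → ℝ)
    (hv : StrictAnti v) (P : (Fin (m + 2) → Bool) → ℝ) (hP : IsAttDist P)
    (hnotexcl : 0 < P (fun _ => true))
    (hp1 : 1 - 1 / Λ < ∑ A : Fin (m + 2) → Bool, if A 0 = true then P A else 0) :
    StrictlyOptimal Λ v P (Equiv.refl (Fin (m + 2))) := by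
  intro ρ' hdiff
  set w : ℕ → ℝ := wnat v with hw
  set g : ℕ → ℝ := gnat P (Equiv.refl (Fin (m+2))) with hg
  set g' : ℕ → ℝ := gnat P ρ' with hg'
  have hsum : ∑ s ∈ range (m+2), g s = 1 := by
    rw [hg, ← Fin.sum_univ_eq_sum_range (gnat P (Equiv.refl (Fin (m+2)))) (m+2),
      Finset.sum_congr rfl fun i _ => gnat_coe P _ i]
    exact sum_matchProb P hP _
  have hsum' : ∑ s ∈ range (m+2), g' s = 1 := by
    rw [hg', ← Fin.sum_univ_eq_sum_range (gnat P ρ') (m+2),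
      Finset.sum_congr rfl fun i _ => gnat_coe P _ i]
    exact sum_matchProb P hP _
  have hU : utility Λ v (matchProb P (Equiv.refl (Fin (m+2))))
      = w (m+1) + ∑ t ∈ range (m+1), (w t - w (t+1)) *
          ((1-Λ) * (∑ j ∈ range (t+1), g j) + Λ * (∑ j ∈ range (t+1), g j)^2) :=
    (util_eq_nat Λ v P _).trans (util_rw (m+1) Λ w g hsum)
  have hU' : utility Λ v (matchProb P ρ')
      = w (m+1) + ∑ t ∈ range (m+1), (w t - w (t+1)) *
          ((1-Λ) * (∑ j ∈ range (t+1), g' j) + Λ * (∑ j ∈ range (t+1), g' j)^2) :=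
    (util_eq_nat Λ v P _).trans (util_rw (m+1) Λ w g' hsum')
  -- cumulative facts
  have hcumle : ∀ t : ℕ, ∀ ht : t < m+2,
      ∑ j ∈ range (t+1), g' j ≤ ∑ j ∈ range (t+1), g j := by
    intro t ht
    rw [hg, hg', cum_nat P ρ' t ht, cum_nat P _ t ht]
    exact cum_le_cum_id P hP ρ' ⟨t, ht⟩
  have hcumgt : ∀ t : ℕ, ∀ ht : t < m+2, 1 - 1/Λ < ∑ j ∈ range (t+1), g j := by
    intro t ht
    refine lt_of_lt_of_le hp1 ?_
    rw [hg, cum_nat P _ t ht]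
    exact p1_le_cum P hP ⟨t, ht⟩
  have hg'nn : ∀ j, 0 ≤ g' j := by
    intro j
    rw [hg', gnat]
    split
    · exact matchProb_nonneg P hP _ _
    · exact le_rfl
  have hcum'nn : ∀ t : ℕ, 0 ≤ ∑ j ∈ range (t+1), g' j :=
    fun t => Finset.sum_nonneg fun j _ => hg'nn j
  -- strict somewhere
  have hne : ∃ t ∈ range (m+1), ∑ j ∈ range (t+1), g' j < ∑ j ∈ range (t+1), g j := by
    by_contra hc
    push_neg at hc
    have hKeq : ∀ j : ℕ, j ≤ m+2 → ∑ i ∈ range j, g' i = ∑ i ∈ range j, g i := by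
      intro j hj
      cases j with
      | zero => simp
      | succ t =>
        rcases Nat.lt_or_ge t (m+1) with h | h
        · exact le_antisymm (hcumle t (by omega)) (hc t (mem_range.mpr h))
        · have ht : t = m+1 := by omega
          subst ht
          rw [hsum, hsum']
    have heq : matchProb P ρ' = matchProb P (Equiv.refl (Fin (m+2))) := by
      funext s
      have h1 : g' ↑s = g ↑s := by
        have e1 := hKeq (↑s + 1) (by omega)
        have e2 := hKeq ↑s (by omega)
        rw [Finset.sum_range_succ, Finset.sum_range_succ, e2] at e1
        linarith
      rw [hg, hg', gnat_coe, gnat_coe] at h1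
      exact h1
    exact hdiff heq
  -- conclude
  rw [hU, hU']
  refine (add_lt_add_iff_left _).mpr ?_
  refine Finset.sum_lt_sum (fun t htm => ?_) ?_
  · refine mul_le_mul_of_nonneg_left ?_ ?_
    · rw [mem_range] at htm
      exact phi_le Λ _ _ hΛ (hcum'nn t) (hcumle t (by omega)) (hcumgt t (by omega))
    · rw [mem_range] at htm
      rw [hw, wnat, wnat, dif_pos (by omega : t < m+2), dif_pos (by omega : t+1 < m+2)]
      exact sub_nonneg.mpr (hv (Fin.mk_lt_mk.mpr (Nat.lt_succ_self t))).le
  · obtain ⟨t, htm, hlt⟩ := hne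
    refine ⟨t, htm, ?_⟩
    rw [mem_range] at htm
    refine mul_lt_mul_of_pos_left ?_ ?_
    · exact phi_lt Λ _ _ hΛ (hcum'nn t) hlt (hcumgt t (by omega))
    · rw [hw, wnat, wnat, dif_pos (by omega : t < m+2), dif_pos (by omega : t+1 < m+2)]
      exact sub_pos.mpr (hv (Fin.mk_lt_mk.mpr (Nat.lt_succ_self t)))
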